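/- (Uniqueness of the common past vector in the proof of trivial state-space intersection.) Let N_j ∈ F^{k×(n−k)}, j ∈ ZMod n, satisfy N_{j+1} = N_j + G_jᵀ H_j with all H_j ≠ 0, where row(N_j,l) = 0 for j ∉ (a_l,b_l] and the rows {row(N_j,l) : j ∈ (a_l,b_l]} are linearly independent for each j, and suppose for every j either (i) H_j ∉ im N_j, or (ii) j = b_m for a unique m and H_j ∈ span(row(N_j,m)). If w ∈ F^{n−k} satisfies w = α_j N_j for every j (with some α_j ∈ F^k), then there is a single α ∈ F^k with w = α N_j for all j, namely α = (α_{b_1,1},...,α_{b_k,k}). -/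
import Mathlib


open scoped Classical

def circIoc {n : ℕ} (a b : ZMod n) : Set (ZMod n) :=
  {x | 1 ≤ (x - a).val ∧ (x - a).val ≤ (b - a).val}

def circIcc {n : ℕ} (a b : ZMod n) : Set (ZMod n) :=
  {x | (x - a).val ≤ (b - a).val}

def IsSpan {n : ℕ} {F : Type*} [Field F] (c : ZMod n → F) (a b : ZMod n) : Prop :=
  c a ≠ 0 ∧ c b ≠ 0 ∧ ∀ j, c j ≠ 0 → j ∈ circIcc a b

lemma zmod_val_one' {n : ℕ} (hn : 1 < n) : (1 : ZMod n).val = 1 := by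
  haveI : Fact (1 < n) := ⟨hn⟩
  exact ZMod.val_one n

lemma zmod_val_sub_one {n : ℕ} [NeZero n] (x : ZMod n) (h : x ≠ 0) :
    (x - 1).val = x.val - 1 := by
  have hn : 1 < n := by
    rcases Nat.lt_or_ge 1 n with h1 | h1
    · exact h1
    · interval_cases n
      · exact absurd rfl (NeZero.ne 0)
      · exact absurd (Subsingleton.elim x 0) h
  set y := x - 1 with hy
  have hx : x = y + 1 := by ring
  by_cases hlt : y.val + 1 < n
  · have := ZMod.val_add_of_lt (a := y) (b := 1) (by simpa [zmod_val_one' hn] using hlt)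
    rw [hx, this, zmod_val_one' hn]; omega
  · have hyv : y.val = n - 1 := by have := ZMod.val_lt y; omega
    have hx0 : x = 0 := by
      rw [hx, ← ZMod.natCast_rightInverse y, ← Nat.cast_one, ← Nat.cast_add, hyv]
      rw [show n - 1 + 1 = n by omega]
      exact ZMod.natCast_self n
    exact absurd hx0 h

lemma zmod_val_eq_imp_eq {n : ℕ} [NeZero n] {x y : ZMod n} (h : x.val = y.val) : x = y :=
  ZMod.val_injective n h

lemma circIoc_step {n : ℕ} [NeZero n] {a b j : ZMod n}
    (hj : j ∈ circIoc a b) (hne : j ≠ b) :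
    (j + 1) ∈ circIoc a b ∧ (b - (j + 1)).val = (b - j).val - 1 ∧ 1 ≤ (b - j).val := by
  obtain ⟨h1, h2⟩ := hj
  have hBlt : (b - a).val < n := ZMod.val_lt _
  have hne' : (j - a).val ≠ (b - a).val := by
    intro he
    exact hne (by have := zmod_val_eq_imp_eq he; linear_combination this)
  have hlt : (j - a).val < (b - a).val := lt_of_le_of_ne h2 hne'
  have hadd : (j + 1 - a) = (j - a) + 1 := by ring
  have h1n : 1 < n := by omega
  have hval : (j + 1 - a).val = (j - a).val + 1 := by
    rw [hadd]
    have := ZMod.val_add_of_lt (a := j - a) (b := 1)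
      (by rw [zmod_val_one' h1n]; omega)
    rw [this, zmod_val_one' h1n]
  have hbj : b - j ≠ 0 := by
    intro h0; exact hne (by linear_combination -h0)
  have hbj1 : 1 ≤ (b - j).val := by
    have := (ZMod.val_eq_zero (b - j)).not.2 hbj
    omega
  refine ⟨⟨by omega, by omega⟩, ?_, hbj1⟩
  have : b - (j + 1) = (b - j) - 1 := by ring
  rw [this, zmod_val_sub_one _ hbj]

/-- Gluing step in the proof that the state spaces intersect trivially: if
`w = α_j N_j` for every time `j`, then the single vector `α` with entries
`α_{b_l, l}` satisfies `w = α N_j` for all `j`. -/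
theorem stmt19 (F : Type*) [Field F] (n k m : ℕ) [NeZero n]
    (a b : Fin k → ZMod n)
    (ha : Function.Injective a) (hb : Function.Injective b)
    (G : Matrix (Fin k) (ZMod n) F)
    (hspan : ∀ l, IsSpan (G l) (a l) (b l))
    (Hv : ZMod n → Fin m → F) (hHv : ∀ j, Hv j ≠ 0)
    (N : ZMod n → Matrix (Fin k) (Fin m) F)
    (hNrec : ∀ j : ZMod n, N (j + 1) = N j + Matrix.of (fun l c => G l j * Hv j c))
    (hzero : ∀ j l, j ∉ circIoc (a l) (b l) → N j l = 0)
    (hind : ∀ j : ZMod n, LinearIndependent F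
      (fun l : {l : Fin k // j ∈ circIoc (a l) (b l)} => N j l.1))
    (hdich : ∀ j : ZMod n,
      (Hv j ∉ Submodule.span F (Set.range (N j))) ∨
      ∃ l, b l = j ∧ ∃ t : F, Hv j = t • N j l)
    (w : Fin m → F) (α : ZMod n → Fin k → F)
    (hα : ∀ j c, w c = ∑ l, α j l * N j l c) :
    ∀ j c, (∑ l, α (b l) l * N j l c) = w c := by
  -- starting and ending points differ
  have hab : ∀ l, a l ≠ b l := by
    intro l heq
    have hN0 : ∀ j, N j l = 0 := by
      intro j
      apply hzero
      intro ⟨h1, h2⟩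
      rw [← heq, sub_self, ZMod.val_zero] at h2
      omega
    obtain ⟨c, hc⟩ := Function.ne_iff.mp (hHv (a l))
    have h := congrFun (congrFun (hNrec (a l)) l) c
    simp only [Matrix.add_apply, Matrix.of_apply] at h
    rw [hN0, hN0] at h
    simp only [Pi.zero_apply, zero_add] at h
    have hG := (hspan l).1
    rcases mul_eq_zero.mp h.symm with h' | h'
    · exact hG h'
    · exact hc h'
  -- b l lies in the interval
  have hbmem : ∀ l, b l ∈ circIoc (a l) (b l) := by
    intro l
    refine ⟨?_, le_refl _⟩
    have : b l - a l ≠ 0 := fun h0 => hab l (by linear_combination -h0)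
    have := (ZMod.val_eq_zero (b l - a l)).not.2 this
    omega
  -- linear independence extraction
  have key : ∀ (j : ZMod n) (d : Fin k → F), (∑ l, d l • N j l) = 0 →
      ∀ l, j ∈ circIoc (a l) (b l) → d l = 0 := by
    intro j d hsum l hl
    have hli := hind j
    rw [Fintype.linearIndependent_iff] at hli
    have hsub : (∑ i : {l : Fin k // j ∈ circIoc (a l) (b l)}, d i.1 • N j i.1) = 0 := by
      rw [← Finset.sum_subtype (Finset.univ.filter fun l => j ∈ circIoc (a l) (b l))
        (by intro x; simp) (fun l => d l • N j l)]
      rw [Finset.sum_filter_of_ne (by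
        intro x _ hx
        by_contra hmem
        exact hx (by rw [hzero j x hmem, smul_zero]))]
      exact hsum
    exact hli (fun i => d i.1) hsub ⟨l, hl⟩
  -- every α j gives w as sum of smuls
  have hS : ∀ j, (∑ l, α j l • N j l) = w := by
    intro j
    funext c
    rw [Finset.sum_apply]
    exact (hα j c).symm
  -- the one-step comparison
  have step : ∀ (j : ZMod n) (l : Fin k), j ∈ circIoc (a l) (b l) → j ≠ b l →
      α j l = α (j + 1) l := by
    intro j l hl hne
    have hrec : ∀ l', N (j + 1) l' = N j l' + G l' j • Hv j := by
      intro l'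
      funext c
      have := congrFun (congrFun (hNrec j) l') c
      simpa using this
    set c0 : F := ∑ l', α (j + 1) l' * G l' j with hc0def
    have key0 : (∑ l', (α j l' - α (j + 1) l') • N j l') = c0 • Hv j := by
      have h2 : (∑ l', α (j + 1) l' • N (j + 1) l') = w := hS (j + 1)
      have h2' : (∑ l', α (j + 1) l' • N j l') + c0 • Hv j = w := by
        rw [← h2]
        simp only [hrec, smul_add, Finset.sum_add_distrib]
        congr 1
        rw [hc0def, Finset.sum_smul]
        congr 1
        funext l'
        rw [smul_smul]
      calc (∑ l', (α j l' - α (j + 1) l') • N j l')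
          = (∑ l', α j l' • N j l') - ∑ l', α (j + 1) l' • N j l' := by
            rw [← Finset.sum_sub_distrib]
            congr 1; funext l'; rw [sub_smul]
        _ = w - ∑ l', α (j + 1) l' • N j l' := by rw [hS j]
        _ = c0 • Hv j := by rw [← h2']; abel
    rcases hdich j with hni | ⟨m0, hbm0, t, hHt⟩
    · have hc0 : c0 = 0 := by
        by_contra hc
        apply hni
        have hHveq : Hv j = c0⁻¹ • ∑ l', (α j l' - α (j + 1) l') • N j l' := by
          rw [key0, smul_smul, inv_mul_cancel₀ hc, one_smul]
        rw [hHveq]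
        exact Submodule.smul_mem _ _ (Submodule.sum_mem _ fun l' _ =>
          Submodule.smul_mem _ _ (Submodule.subset_span ⟨l', rfl⟩))
      have hz : (∑ l', (α j l' - α (j + 1) l') • N j l') = 0 := by
        rw [key0, hc0, zero_smul]
      have := key j _ hz l hl
      exact sub_eq_zero.mp this
    · have hlm : l ≠ m0 := fun h => hne (h ▸ hbm0.symm)
      set d : Fin k → F := fun l' =>
        (α j l' - α (j + 1) l') - if l' = m0 then c0 * t else 0 with hd
      have hz : (∑ l', d l' • N j l') = 0 := by
        calc (∑ l', d l' • N j l')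
            = (∑ l', (α j l' - α (j + 1) l') • N j l')
              - ∑ l', (if l' = m0 then c0 * t else 0) • N j l' := by
              rw [← Finset.sum_sub_distrib]
              exact Finset.sum_congr rfl fun l' _ => by rw [hd, sub_smul]
          _ = c0 • Hv j - (c0 * t) • N j m0 := by
              rw [key0]
              congr 1
              rw [Finset.sum_eq_single m0]
              · simp
              · intro b' _ hb'; simp [hb']
              · intro h; exact absurd (Finset.mem_univ m0) h
          _ = 0 := by rw [hHt, smul_smul, sub_self]
      have := key j d hz l hl
      simpa [hd, hlm, sub_eq_zero] using this
  -- glue along the interval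
  have glue : ∀ (dist : ℕ) (j : ZMod n) (l : Fin k), (b l - j).val = dist →
      j ∈ circIoc (a l) (b l) → α j l = α (b l) l := by
    intro dist
    induction dist with
    | zero =>
      intro j l hdist _
      have : b l - j = 0 := (ZMod.val_eq_zero _).mp hdist
      have : j = b l := by linear_combination -this
      rw [this]
    | succ d ih =>
      intro j l hdist hl
      have hne : j ≠ b l := by
        intro h
        rw [h, sub_self, ZMod.val_zero] at hdist
        omega
      obtain ⟨hmem, hval, _⟩ := circIoc_step hl hne
      rw [step j l hl hne]
      exact ih (j + 1) l (by omega) hmem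
  -- conclude
  intro j c
  rw [hα j c]
  apply Finset.sum_congr rfl
  intro l _
  by_cases hl : j ∈ circIoc (a l) (b l)
  · rw [glue _ j l rfl hl]
  · rw [hzero j l hl]
    simp
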